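/- Let N ≥ 1, λ ∈ ℝ, and for each j ∈ ℤ/N let L_j < R_j be reals, κ_j : ℝ → ℝ be continuously differentiable with κ_j(x) ≥ 0 on [L_j, R_j], and v_j : ℝ → ℝ be twice continuously differentiable satisfying the eigenvalue equation (κ_j·v_j')'(x) = λ·v_j(x) for all x ∈ [L_j, R_j], together with the γ = 0 edge conditions v_j(R_j) = v_j(L_j) and κ_j(R_j)·v_j'(R_j) = κ_j(L_j)·v_j'(L_j). If ∑_j ∫_{L_j}^{R_j} v_j(x)² dx > 0 (the eigenfunction is not identically zero), then λ ≤ 0. -/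

import Mathlib

open MeasureTheory intervalIntegral

lemma key_elem (lam : ℝ) (L R : ℝ) (hLR : L < R) (κ v : ℝ → ℝ)
    (hκ : ContDiff ℝ 1 κ)
    (hκ0 : ∀ x ∈ Set.Icc L R, 0 ≤ κ x)
    (hv : ContDiff ℝ 2 v)
    (heig : ∀ x ∈ Set.Icc L R, deriv (fun y => κ y * deriv v y) x = lam * v x)
    (hE : v R = v L)
    (hF : κ R * deriv v R = κ L * deriv v L) :
    lam * ∫ x in L..R, (v x) ^ 2 ≤ 0 := by
  have hv' : ContDiff ℝ 1 (deriv v) :=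
    (contDiff_succ_iff_deriv.mp (show ContDiff ℝ (1+1) v by norm_num; exact hv)).2.2
  set u : ℝ → ℝ := fun y => κ y * deriv v y with hu_def
  have hu : ContDiff ℝ 1 u := hκ.mul hv'
  have hparts : ∫ x in L..R, deriv u x * v x + u x * deriv v x = u R * v R - u L * v L := by
    apply intervalIntegral.integral_deriv_mul_eq_sub
    · exact fun x _ => (hu.differentiable one_ne_zero x).hasDerivAt
    · exact fun x _ => (hv.differentiable (by norm_num) x).hasDerivAt
    · exact (hu.continuous_deriv le_rfl).intervalIntegrable _ _
    · exact (hv'.continuous).intervalIntegrable _ _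
  have hbd : u R * v R - u L * v L = 0 := by
    simp only [hu_def]; rw [hE, hF]; ring
  have hint1 : IntervalIntegrable (fun x => deriv u x * v x) volume L R :=
    ((hu.continuous_deriv le_rfl).mul (hv.continuous)).intervalIntegrable _ _
  have hint2 : IntervalIntegrable (fun x => u x * deriv v x) volume L R :=
    (hu.continuous.mul hv'.continuous).intervalIntegrable _ _
  rw [intervalIntegral.integral_add hint1 hint2, hbd] at hparts
  have h1 : ∫ x in L..R, deriv u x * v x = lam * ∫ x in L..R, (v x) ^ 2 := by
    rw [← intervalIntegral.integral_const_mul]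
    apply intervalIntegral.integral_congr
    intro x hx
    rw [Set.uIcc_of_le hLR.le] at hx
    dsimp only
    rw [heig x hx]; ring
  have h2 : ∫ x in L..R, u x * deriv v x = ∫ x in L..R, κ x * (deriv v x) ^ 2 := by
    apply intervalIntegral.integral_congr
    intro x _; simp only [hu_def]; ring
  have hnn : 0 ≤ ∫ x in L..R, κ x * (deriv v x) ^ 2 := by
    apply intervalIntegral.integral_nonneg hLR.le
    intro x hx
    exact mul_nonneg (hκ0 x hx) (sq_nonneg _)
  rw [h1, h2] at hparts
  linarith

theorem eigenvalues_nonpositive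
    (N : ℕ) [NeZero N] (lam : ℝ)
    (L R : ZMod N → ℝ) (hLR : ∀ j, L j < R j)
    (κ v : ZMod N → ℝ → ℝ)
    (hκ : ∀ j, ContDiff ℝ 1 (κ j))
    (hκ0 : ∀ j, ∀ x ∈ Set.Icc (L j) (R j), 0 ≤ κ j x)
    (hv : ∀ j, ContDiff ℝ 2 (v j))
    (heig : ∀ j, ∀ x ∈ Set.Icc (L j) (R j),
      deriv (fun y => κ j y * deriv (v j) y) x = lam * v j x)
    (hE : ∀ j, v j (R j) = v j (L j))
    (hF : ∀ j, κ j (R j) * deriv (v j) (R j) = κ j (L j) * deriv (v j) (L j))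
    (hpos : 0 < ∑ j : ZMod N, ∫ x in (L j)..(R j), (v j x) ^ 2) :
    lam ≤ 0 := by
  have hsum : lam * ∑ j : ZMod N, ∫ x in (L j)..(R j), (v j x) ^ 2 ≤ 0 := by
    rw [Finset.mul_sum]
    apply Finset.sum_nonpos
    intro j _
    exact key_elem lam (L j) (R j) (hLR j) (κ j) (v j) (hκ j) (hκ0 j) (hv j)
      (heig j) (hE j) (hF j)
  nlinarith
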